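/- Let m be a positive integer and let α, β be complex numbers of modulus 1 with α ≠ ±1 and β ≠ ±1, and suppose β^m = α or β^m = α⁻¹ (equivalently T_m(Re β) = Re α). Then β belongs to the subfield ℚ(α) of ℂ generated by α if and only if Re β (viewed as a complex number) belongs to the subfield ℚ(Re α) of ℂ generated by Re α. -/

import Mathlib

open Polynomial

private lemma conj_eq_of_mem_real_closure {r : ℝ} {z : ℂ}
    (hz : z ∈ Subfield.closure ({(r : ℂ)} : Set ℂ)) : (starRingEnd ℂ) z = z := by
  have h : Subfield.closure ({(r : ℂ)} : Set ℂ) ≤ Complex.ofRealHom.fieldRange := by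
    rw [Subfield.closure_le, Set.singleton_subset_iff]
    exact ⟨r, rfl⟩
  obtain ⟨x, rfl⟩ := h hz
  exact Complex.conj_ofReal x

theorem mem_adjoin_iff_re_mem_adjoin_re (m : ℕ) (hm : 0 < m) (α β : ℂ)
    (hα : ‖α‖ = 1) (hβ : ‖β‖ = 1)
    (hα1 : α ≠ 1) (hα1' : α ≠ -1) (hβ1 : β ≠ 1) (hβ1' : β ≠ -1)
    (hpow : β ^ m = α ∨ β ^ m = α⁻¹) :
    β ∈ Subfield.closure ({α} : Set ℂ) ↔
      (β.re : ℂ) ∈ Subfield.closure ({(α.re : ℂ)} : Set ℂ) := by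
  set K := Subfield.closure ({(α.re : ℂ)} : Set ℂ) with hKdef
  set L := Subfield.closure ({α} : Set ℂ) with hLdef
  have hαmem : α ∈ L := Subfield.subset_closure rfl
  have hremem : ((α.re : ℂ)) ∈ K := Subfield.subset_closure rfl
  have h2K : (2 : ℂ) ∈ K := by
    rw [show (2:ℂ) = 1 + 1 by norm_num]; exact K.add_mem K.one_mem K.one_mem
  have hα0 : α ≠ 0 := by intro h; rw [h] at hα; simp at hα
  have hβ0 : β ≠ 0 := by intro h; rw [h] at hβ; simp at hβ
  have hnα : α * (starRingEnd ℂ) α = 1 := by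
    rw [Complex.mul_conj]
    norm_cast
    rw [← Complex.sq_norm, hα]; norm_num
  have hnβ : β * (starRingEnd ℂ) β = 1 := by
    rw [Complex.mul_conj]
    norm_cast
    rw [← Complex.sq_norm, hβ]; norm_num
  set t : ℂ := 2 * (α.re : ℂ) with htdef
  set s : ℂ := 2 * (β.re : ℂ) with hsdef
  have hconjα : (starRingEnd ℂ) α = t - α := by
    have := Complex.add_conj α
    push_cast at this
    linear_combination this
  have hconjβ : (starRingEnd ℂ) β = s - β := by
    have := Complex.add_conj β
    push_cast at this
    linear_combination this
  have ht : t ∈ K := K.mul_mem h2K hremem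
  have hα2 : α ^ 2 = t * α - 1 := by
    rw [hconjα] at hnα; linear_combination -hnα
  have hβ2 : β ^ 2 = s * β - 1 := by
    rw [hconjβ] at hnβ; linear_combination -hnβ
  have hβinv : β⁻¹ = s - β := by
    apply inv_eq_of_mul_eq_one_right
    rw [hconjβ] at hnβ; exact hnβ
  have hβinv2 : (β⁻¹) ^ 2 = s * β⁻¹ - 1 := by
    rw [hβinv]; linear_combination hβ2
  have hrealK : ∀ z ∈ K, (starRingEnd ℂ) z = z := fun z hz =>
    conj_eq_of_mem_real_closure hz
  -- every element of L has the form a + b * α with a, b ∈ K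
  have hrep : ∀ z ∈ L, ∃ a ∈ K, ∃ b ∈ K, z = a + b * α := by
    intro z hz
    induction hz using Subfield.closure_induction with
    | mem x hx =>
      rw [Set.mem_singleton_iff] at hx
      exact ⟨0, K.zero_mem, 1, K.one_mem, by rw [hx]; ring⟩
    | one => exact ⟨1, K.one_mem, 0, K.zero_mem, by ring⟩
    | add x y hx hy ihx ihy =>
      obtain ⟨a, ha, b, hb, rfl⟩ := ihx
      obtain ⟨c, hc, d, hd, rfl⟩ := ihy
      exact ⟨a + c, K.add_mem ha hc, b + d, K.add_mem hb hd, by ring⟩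
    | neg x hx ihx =>
      obtain ⟨a, ha, b, hb, rfl⟩ := ihx
      exact ⟨-a, K.neg_mem ha, -b, K.neg_mem hb, by ring⟩
    | mul x y hx hy ihx ihy =>
      obtain ⟨a, ha, b, hb, rfl⟩ := ihx
      obtain ⟨c, hc, d, hd, rfl⟩ := ihy
      refine ⟨a * c - b * d, K.sub_mem (K.mul_mem ha hc) (K.mul_mem hb hd),
        a * d + b * c + b * d * t,
        K.add_mem (K.add_mem (K.mul_mem ha hd) (K.mul_mem hb hc))
          (K.mul_mem (K.mul_mem hb hd) ht), ?_⟩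
      linear_combination (b * d) * hα2
    | inv x hx ihx =>
      obtain ⟨a, ha, b, hb, rfl⟩ := ihx
      by_cases hx0 : a + b * α = 0
      · rw [hx0]; exact ⟨0, K.zero_mem, 0, K.zero_mem, by simp⟩
      · set N : ℂ := a ^ 2 + a * b * t + b ^ 2 with hNdef
        have hconjx : (starRingEnd ℂ) (a + b * α) = a + b * t - b * α := by
          rw [map_add, map_mul, hrealK a ha, hrealK b hb, hconjα]; ring
        have hmul : (a + b * α) * (a + b * t - b * α) = N := by
          rw [hNdef]; linear_combination (-b ^ 2) * hα2
        have hN0 : N ≠ 0 := by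
          rw [← hmul]
          refine mul_ne_zero hx0 ?_
          rw [← hconjx, starRingEnd_apply, star_ne_zero]
          exact hx0
        have hNK : N ∈ K :=
          K.add_mem (K.add_mem (K.pow_mem ha 2)
            (K.mul_mem (K.mul_mem ha hb) ht)) (K.pow_mem hb 2)
        refine ⟨(a + b * t) / N, K.div_mem (K.add_mem ha (K.mul_mem hb ht)) hNK,
          -b / N, K.div_mem (K.neg_mem hb) hNK, ?_⟩
        apply inv_eq_of_mul_eq_one_right
        field_simp
        linear_combination hmul
  have hKL : K ≤ L := by
    rw [hKdef, Subfield.closure_le, Set.singleton_subset_iff]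
    have h1 : α⁻¹ = t - α := by
      apply inv_eq_of_mul_eq_one_right
      rw [hconjα] at hnα; exact hnα
    have h2 : (α.re : ℂ) = (α + α⁻¹) / 2 := by
      rw [h1, htdef]; ring
    rw [h2]
    exact L.div_mem (L.add_mem hαmem (L.inv_mem hαmem))
      (by rw [show (2:ℂ) = 1 + 1 by norm_num]; exact L.add_mem L.one_mem L.one_mem)
  constructor
  · -- forward direction
    intro hβL
    obtain ⟨a, ha, b, hb, hab⟩ := hrep β hβL
    have hconjβ' : (starRingEnd ℂ) β = a + b * t - b * α := by
      rw [hab, map_add, map_mul, hrealK a ha, hrealK b hb, hconjα]; ring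
    have h2re : (β.re : ℂ) = (2 * a + b * t) / 2 := by
      have h := Complex.add_conj β
      push_cast at h
      rw [hconjβ'] at h
      linear_combination -h / 2 + hab / 2
    rw [h2re]
    exact K.div_mem (K.add_mem (K.mul_mem h2K ha) (K.mul_mem hb ht)) h2K
  · -- backward direction
    intro hre
    have hs : s ∈ K := K.mul_mem h2K hre
    have key : ∀ n : ℕ, ∃ p q : ℂ, p ∈ K ∧ q ∈ K ∧
        β ^ n = p + q * β ∧ (β⁻¹) ^ n = p + q * β⁻¹ := by
      intro n
      induction n with
      | zero => exact ⟨1, 0, K.one_mem, K.zero_mem, by ring, by ring⟩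
      | succ n ih =>
        obtain ⟨p, q, hp, hq, h1, h2⟩ := ih
        refine ⟨-q, p + q * s, K.neg_mem hq,
          K.add_mem hp (K.mul_mem hq hs), ?_, ?_⟩
        · rw [pow_succ, h1]; linear_combination q * hβ2
        · rw [pow_succ, h2]; linear_combination q * hβinv2
    obtain ⟨p, q, hp, hq, h1, h2⟩ := key m
    have hγL : β ^ m ∈ L := by
      rcases hpow with h | h
      · rw [h]; exact hαmem
      · rw [h]; exact L.inv_mem hαmem
    by_cases hq0 : q = 0
    · -- then β ^ (2m) = 1 and α ^ 2 = 1, contradiction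
      exfalso
      have hne : β ^ m ≠ 0 := pow_ne_zero _ hβ0
      have h3 : β ^ m = (β ^ m)⁻¹ := by
        rw [← inv_pow, h1, h2, hq0]; ring
      have h4 : (β ^ m) ^ 2 = 1 := by
        rw [sq]
        nth_rewrite 2 [h3]
        rw [mul_inv_cancel₀ hne]
      have hα4 : α ^ 2 = 1 := by
        rcases hpow with h | h
        · rw [← h]; exact h4
        · have h5 : (α⁻¹) ^ 2 = 1 := by rw [← h]; exact h4
          rw [inv_pow, inv_eq_one] at h5
          exact h5
      have : (α - 1) * (α + 1) = 0 := by linear_combination hα4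
      rcases mul_eq_zero.mp this with h | h
      · exact hα1 (by linear_combination h)
      · exact hα1' (by linear_combination h)
    · have hβeq : β = (β ^ m - p) / q := by
        rw [eq_div_iff hq0, h1]; ring
      rw [hβeq]
      exact L.div_mem (L.sub_mem hγL (hKL hp)) (hKL hq)
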